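/- Corollary 2 (relaxed δISS condition for deep GRUs inside the invariant set): consider the deep GRU with M layers and define, for each layer i, σ̄_z^i = σ(‖[W_z^i U_z^i b_z^i]‖_∞), σ̄_f^i = σ(‖[W_f^i U_f^i b_f^i]‖_∞), φ̄_r^i = tanh(‖[W_r^i U_r^i b_r^i]‖_∞). Suppose that for every layer i, ‖U_r^i‖_∞ ( (1/4) ‖U_f^i‖_∞ + σ̄_f^i ) < 1 − (1/4) ((1 + φ̄_r^i)/(1 − σ̄_z^i)) ‖U_z^i‖_∞. Then the deep GRU restricted to initial states with ‖x̄^i‖_∞ ≤ 1 for all layers is Incrementally Input-to-State Stable: there exist a class-KL function β_Δ and a class-K∞ function γ_Δu such that for every pair of such initial states x̄_a, x̄_b, every pair of input sequences u_a, u_b with ‖u_a(t)‖_∞ ≤ 1 and ‖u_b(t)‖_∞ ≤ 1 for all t, and every k ≥ 0, ‖x_a(k) − x_b(k)‖_∞ ≤ β_Δ(‖x̄_a − x̄_b‖_∞, k) + γ_Δu(sup_t ‖u_a(t) − u_b(t)‖_∞). -/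

import Mathlib

open Real Filter

/-- The _root_.sigmoid activation function. -/
noncomputable def sigmoid (s : ℝ) : ℝ := 1 / (1 + Real.exp (-s))

/-- Induced infinity norm of a matrix (maximum absolute row sum). -/
noncomputable def matNorm {n m : ℕ} (A : Matrix (Fin n) (Fin m) ℝ) : ℝ :=
  ⨆ i, ∑ j, |A i j|

/-- Infinity norm of the horizontal concatenation `[A B c]`
(maximum absolute row sum of the concatenated matrix). -/
noncomputable def catNorm {n m p : ℕ} (A : Matrix (Fin n) (Fin m) ℝ)
    (B : Matrix (Fin n) (Fin p) ℝ) (c : Fin n → ℝ) : ℝ :=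
  ⨆ i, (∑ j, |A i j| + ∑ j, |B i j| + |c i|)

/-- One step of the single-layer GRU:
`x⁺ = z ∘ x + (1 - z) ∘ tanh(W_r u + U_r (f ∘ x) + b_r)`,
`z = σ(W_z u + U_z x + b_z)`, `f = σ(W_f u + U_f x + b_f)`. -/
noncomputable def gruStep {nu nx : ℕ}
    (Wz Wf Wr : Matrix (Fin nx) (Fin nu) ℝ)
    (Uz Uf Ur : Matrix (Fin nx) (Fin nx) ℝ)
    (bz bf br : Fin nx → ℝ)
    (u : Fin nu → ℝ) (x : Fin nx → ℝ) : Fin nx → ℝ :=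
  let z : Fin nx → ℝ := fun i => _root_.sigmoid ((Wz.mulVec u + Uz.mulVec x + bz) i)
  let f : Fin nx → ℝ := fun i => _root_.sigmoid ((Wf.mulVec u + Uf.mulVec x + bf) i)
  let r : Fin nx → ℝ := fun i => Real.tanh ((Wr.mulVec u + Ur.mulVec (f * x) + br) i)
  fun j => z j * x j + (1 - z j) * r j

/-- A function `γ : [0,∞) → [0,∞)` is of class K∞ if it is continuous,
strictly increasing, unbounded and `γ 0 = 0`. -/
def IsKInf (γ : ℝ → ℝ) : Prop :=
  ContinuousOn γ (Set.Ici 0) ∧ StrictMonoOn γ (Set.Ici 0) ∧ γ 0 = 0 ∧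
    ∀ M : ℝ, ∃ s, 0 ≤ s ∧ M < γ s

/-- A function `β : [0,∞) × ℕ → [0,∞)` is of class KL if `β (·, k)` is of class K∞
for each `k`, `β (s, ·)` is nonincreasing, and `β (s, k) → 0` as `k → ∞`. -/
def IsKL (β : ℝ → ℕ → ℝ) : Prop :=
  (∀ k : ℕ, IsKInf fun s => β s k) ∧
    (∀ s : ℝ, 0 ≤ s → ∀ k l : ℕ, k ≤ l → β s l ≤ β s k) ∧
    (∀ s : ℝ, 0 ≤ s → Filter.Tendsto (fun k : ℕ => β s k) Filter.atTop (nhds 0))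

/-- Input dimension of layer `i` of a deep GRU: the first layer is fed by the
external input (dimension `nu`), layer `i+1` is fed by the state of layer `i`. -/
def inDim (nu : ℕ) (n : ℕ → ℕ) : ℕ → ℕ
  | 0 => nu
  | i + 1 => n i

lemma one_add_exp_pos (s : ℝ) : 0 < 1 + Real.exp (-s) := by positivity

lemma sigmoid_pos (s : ℝ) : 0 < _root_.sigmoid s := by
  unfold _root_.sigmoid; positivity

lemma sigmoid_lt_one (s : ℝ) : _root_.sigmoid s < 1 := by
  unfold _root_.sigmoid
  rw [div_lt_one (one_add_exp_pos s)]
  nlinarith [Real.exp_pos (-s)]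

lemma sigmoid_neg (s : ℝ) : _root_.sigmoid (-s) = 1 - _root_.sigmoid s := by
  unfold _root_.sigmoid
  rw [neg_neg]
  have h1 := Real.exp_pos s
  have h2 := Real.exp_pos (-s)
  have h3 : Real.exp s * Real.exp (-s) = 1 := by
    rw [← Real.exp_add]; simp
  field_simp
  nlinarith

lemma sigmoid_mono : Monotone _root_.sigmoid := by
  intro a b hab
  unfold _root_.sigmoid
  apply div_le_div_of_nonneg_left (by norm_num) (one_add_exp_pos b)
  have := Real.exp_le_exp.2 (neg_le_neg hab)
  linarith

lemma hasDerivAt_sigmoid (s : ℝ) :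
    HasDerivAt _root_.sigmoid (Real.exp (-s) / (1 + Real.exp (-s)) ^ 2) s := by
  have h1 : HasDerivAt (fun x : ℝ => -x) (-1) s := (hasDerivAt_id s).neg
  have h2 : HasDerivAt (fun x : ℝ => Real.exp (-x)) (Real.exp (-s) * (-1)) s := h1.exp
  have h3 : HasDerivAt (fun x : ℝ => 1 + Real.exp (-x)) (Real.exp (-s) * (-1)) s :=
    h2.const_add 1
  have h4 := h3.inv (ne_of_gt (one_add_exp_pos s))
  have : _root_.sigmoid = fun x : ℝ => (1 + Real.exp (-x))⁻¹ := by
    funext x; unfold _root_.sigmoid; rw [one_div]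
  rw [this]
  exact h4.congr_deriv (by ring)

lemma sigmoid_lipschitz (a b : ℝ) : |_root_.sigmoid a - _root_.sigmoid b| ≤ (1/4) * |a - b| := by
  have hder : ∀ x ∈ Set.univ, HasDerivWithinAt _root_.sigmoid
      (Real.exp (-x) / (1 + Real.exp (-x)) ^ 2) Set.univ x :=
    fun x _ => (_root_.hasDerivAt_sigmoid x).hasDerivWithinAt
  have hbound : ∀ x ∈ Set.univ, ‖Real.exp (-x) / (1 + Real.exp (-x)) ^ 2‖ ≤ 1/4 := by
    intro x _
    rw [Real.norm_eq_abs, abs_of_nonneg (by positivity)]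
    rw [div_le_iff₀ (by positivity)]
    nlinarith [Real.exp_pos (-x), sq_nonneg (1 - Real.exp (-x))]
  have := convex_univ.norm_image_sub_le_of_norm_hasDerivWithin_le hder hbound
    (Set.mem_univ b) (Set.mem_univ a)
  simpa [Real.norm_eq_abs] using this

lemma tanh_eq_sigmoid (x : ℝ) : Real.tanh x = 2 * _root_.sigmoid (2 * x) - 1 := by
  rw [Real.tanh_eq_sinh_div_cosh, Real.sinh_eq, Real.cosh_eq]
  unfold _root_.sigmoid
  have h1 := Real.exp_pos x
  have h2 := Real.exp_pos (-x)
  have h3 := Real.exp_pos (-(2*x))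
  have he : Real.exp (-(2*x)) = Real.exp (-x) * Real.exp (-x) := by
    rw [← Real.exp_add]; ring_nf
  have h4 : Real.exp x * Real.exp (-x) = 1 := by rw [← Real.exp_add]; simp
  field_simp
  rw [show x * 2 = 2 * x by ring, he]; linear_combination (2 * Real.exp (-x)) * h4

lemma abs_tanh_le_one (x : ℝ) : |Real.tanh x| ≤ 1 := by
  rw [tanh_eq_sigmoid, abs_le]
  have := _root_.sigmoid_pos (2*x); have := _root_.sigmoid_lt_one (2*x)
  constructor <;> nlinarith

lemma tanh_mono : Monotone Real.tanh := by
  intro a b hab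
  rw [tanh_eq_sigmoid, tanh_eq_sigmoid]
  have := sigmoid_mono (show 2*a ≤ 2*b by linarith)
  linarith

lemma tanh_lipschitz (a b : ℝ) : |Real.tanh a - Real.tanh b| ≤ |a - b| := by
  rw [tanh_eq_sigmoid, tanh_eq_sigmoid]
  have := sigmoid_lipschitz (2*a) (2*b)
  have h : 2 * _root_.sigmoid (2*a) - 1 - (2 * _root_.sigmoid (2*b) - 1) = 2 * (_root_.sigmoid (2*a) - _root_.sigmoid (2*b)) := by ring
  rw [h, abs_mul]
  have h2 : |2*a - 2*b| = 2 * |a - b| := by rw [show (2*a - 2*b) = 2*(a-b) by ring, abs_mul]; norm_num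
  rw [h2] at this
  rw [abs_two]
  linarith [abs_nonneg (_root_.sigmoid (2*a) - _root_.sigmoid (2*b))]

lemma tanh_nonneg {x : ℝ} (hx : 0 ≤ x) : 0 ≤ Real.tanh x := by
  have := tanh_mono hx
  simpa [Real.tanh_zero] using this

lemma abs_tanh_le_tanh {x N : ℝ} (h : |x| ≤ N) : |Real.tanh x| ≤ Real.tanh N := by
  rw [abs_le] at h ⊢
  constructor
  · have := tanh_mono (show -N ≤ x from h.1)
    rw [Real.tanh_neg] at this; linarith
  · exact tanh_mono h.2

lemma matNorm_nonneg {n m : ℕ} (A : Matrix (Fin n) (Fin m) ℝ) : 0 ≤ matNorm A :=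
  Real.iSup_nonneg fun i => Finset.sum_nonneg fun j _ => abs_nonneg _

lemma catNorm_nonneg {n m p : ℕ} (A : Matrix (Fin n) (Fin m) ℝ)
    (B : Matrix (Fin n) (Fin p) ℝ) (c : Fin n → ℝ) : 0 ≤ catNorm A B c :=
  Real.iSup_nonneg fun i => by positivity

lemma rowSum_le_matNorm {n m : ℕ} (A : Matrix (Fin n) (Fin m) ℝ) (i : Fin n) :
    ∑ j, |A i j| ≤ matNorm A := by
  unfold matNorm
  exact le_ciSup (Finite.bddAbove_range fun i => ∑ j, |A i j|) i

lemma row_abs_le {n m : ℕ} (A : Matrix (Fin n) (Fin m) ℝ) (v : Fin m → ℝ) (i : Fin n) :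
    |A.mulVec v i| ≤ (∑ j, |A i j|) * ‖v‖ := by
  rw [Matrix.mulVec, dotProduct]
  calc |∑ j, A i j * v j| ≤ ∑ j, |A i j * v j| := Finset.abs_sum_le_sum_abs _ _
    _ ≤ ∑ j, |A i j| * ‖v‖ := by
        apply Finset.sum_le_sum
        intro j _
        rw [abs_mul]
        exact mul_le_mul_of_nonneg_left
          (by rw [← Real.norm_eq_abs]; exact norm_le_pi_norm v j) (abs_nonneg _)
    _ = (∑ j, |A i j|) * ‖v‖ := (Finset.sum_mul _ _ _).symm

lemma abs_mulVec_le {n m : ℕ} (A : Matrix (Fin n) (Fin m) ℝ) (v : Fin m → ℝ) (i : Fin n) :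
    |A.mulVec v i| ≤ matNorm A * ‖v‖ :=
  le_trans (row_abs_le A v i)
    (mul_le_mul_of_nonneg_right (rowSum_le_matNorm A i) (norm_nonneg _))

lemma arg_abs_le {n m p : ℕ} (A : Matrix (Fin n) (Fin m) ℝ)
    (B : Matrix (Fin n) (Fin p) ℝ) (c : Fin n → ℝ) (u : Fin m → ℝ) (x : Fin p → ℝ)
    (hu : ‖u‖ ≤ 1) (hx : ‖x‖ ≤ 1) (i : Fin n) :
    |(A.mulVec u + B.mulVec x + c) i| ≤ catNorm A B c := by
  have h1 : |A.mulVec u i| ≤ ∑ j, |A i j| := by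
    have := row_abs_le A u i
    nlinarith [Finset.sum_nonneg (fun j (_ : j ∈ Finset.univ) => abs_nonneg (A i j)),
      norm_nonneg u]
  have h2 : |B.mulVec x i| ≤ ∑ j, |B i j| := by
    have := row_abs_le B x i
    nlinarith [Finset.sum_nonneg (fun j (_ : j ∈ Finset.univ) => abs_nonneg (B i j)),
      norm_nonneg x]
  have h3 : (∑ j, |A i j| + ∑ j, |B i j| + |c i|) ≤ catNorm A B c := by
    unfold catNorm
    exact le_ciSup (Finite.bddAbove_range fun i => ∑ j, |A i j| + ∑ j, |B i j| + |c i|) i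
  calc |(A.mulVec u + B.mulVec x + c) i|
      ≤ |A.mulVec u i| + |B.mulVec x i| + |c i| := by
        simp only [Pi.add_apply]
        exact (abs_add_le _ _).trans (by gcongr; exact abs_add_le _ _)
    _ ≤ ∑ j, |A i j| + ∑ j, |B i j| + |c i| := by linarith
    _ ≤ catNorm A B c := h3

lemma gruStep_apply {nu nx : ℕ}
    (Wz Wf Wr : Matrix (Fin nx) (Fin nu) ℝ)
    (Uz Uf Ur : Matrix (Fin nx) (Fin nx) ℝ)
    (bz bf br : Fin nx → ℝ)
    (u : Fin nu → ℝ) (x : Fin nx → ℝ) (j : Fin nx) :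
    gruStep Wz Wf Wr Uz Uf Ur bz bf br u x j =
      _root_.sigmoid ((Wz.mulVec u + Uz.mulVec x + bz) j) * x j +
        (1 - _root_.sigmoid ((Wz.mulVec u + Uz.mulVec x + bz) j)) *
          Real.tanh ((Wr.mulVec u +
            Ur.mulVec ((fun i => _root_.sigmoid ((Wf.mulVec u + Uf.mulVec x + bf) i)) * x) + br) j) :=
  rfl

lemma gru_invariant {nu nx : ℕ}
    (Wz Wf Wr : Matrix (Fin nx) (Fin nu) ℝ)
    (Uz Uf Ur : Matrix (Fin nx) (Fin nx) ℝ)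
    (bz bf br : Fin nx → ℝ)
    (u : Fin nu → ℝ) (x : Fin nx → ℝ) (hx : ‖x‖ ≤ 1) :
    ‖gruStep Wz Wf Wr Uz Uf Ur bz bf br u x‖ ≤ 1 := by
  rw [pi_norm_le_iff_of_nonneg (by norm_num)]
  intro j
  rw [gruStep_apply, Real.norm_eq_abs]
  set z := _root_.sigmoid ((Wz.mulVec u + Uz.mulVec x + bz) j) with hz
  have hz0 : 0 < z := _root_.sigmoid_pos _
  have hz1 : z < 1 := _root_.sigmoid_lt_one _
  have hxj : |x j| ≤ 1 := by
    rw [← Real.norm_eq_abs]; exact (norm_le_pi_norm x j).trans hx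
  have htj := abs_tanh_le_one ((Wr.mulVec u +
    Ur.mulVec ((fun i => _root_.sigmoid ((Wf.mulVec u + Uf.mulVec x + bf) i)) * x) + br) j)
  set r := Real.tanh ((Wr.mulVec u +
    Ur.mulVec ((fun i => _root_.sigmoid ((Wf.mulVec u + Uf.mulVec x + bf) i)) * x) + br) j)
  calc |z * x j + (1 - z) * r| ≤ |z * x j| + |(1 - z) * r| := abs_add_le _ _
    _ = z * |x j| + (1 - z) * |r| := by
        have e1 : |z * x j| = z * |x j| := by rw [abs_mul, abs_of_nonneg hz0.le]
        have e2 : |(1 - z) * r| = (1 - z) * |r| := by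
          rw [abs_mul, abs_of_nonneg (show (0:ℝ) ≤ 1 - z by linarith)]
        rw [e1, e2]
    _ ≤ z * 1 + (1 - z) * 1 := by
        apply add_le_add
        · exact mul_le_mul_of_nonneg_left hxj hz0.le
        · exact mul_le_mul_of_nonneg_left htj (by linarith)
    _ = 1 := by ring

set_option maxHeartbeats 1000000
lemma sig_mul_norm_le {nx : ℕ} (w : Fin nx → ℝ) (x : Fin nx → ℝ) (hx : ‖x‖ ≤ 1) :
    ‖(fun i => _root_.sigmoid (w i)) * x‖ ≤ 1 := by
  rw [pi_norm_le_iff_of_nonneg (by norm_num)]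
  intro l
  rw [Pi.mul_apply, Real.norm_eq_abs, abs_mul]
  have h1 : |_root_.sigmoid (w l)| ≤ 1 := by
    rw [abs_of_nonneg (_root_.sigmoid_pos _).le]; exact (_root_.sigmoid_lt_one _).le
  have h2 : |x l| ≤ 1 := by
    rw [← Real.norm_eq_abs]; exact (norm_le_pi_norm x l).trans hx
  nlinarith [abs_nonneg (_root_.sigmoid (w l)), abs_nonneg (x l)]

lemma gru_contract {nu nx : ℕ} (Wz Wf Wr : Matrix (Fin nx) (Fin nu) ℝ)
    (Uz Uf Ur : Matrix (Fin nx) (Fin nx) ℝ) (bz bf br : Fin nx → ℝ)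
    (ua ub : Fin nu → ℝ) (xa xb : Fin nx → ℝ)
    (hua : ‖ua‖ ≤ 1) (hub : ‖ub‖ ≤ 1) (hxa : ‖xa‖ ≤ 1) (hxb : ‖xb‖ ≤ 1)
    (hA : matNorm Ur * ((1/4) * matNorm Uf + _root_.sigmoid (catNorm Wf Uf bf)) ≤ 1) :
    ‖gruStep Wz Wf Wr Uz Uf Ur bz bf br ua xa -
        gruStep Wz Wf Wr Uz Uf Ur bz bf br ub xb‖ ≤
      (_root_.sigmoid (catNorm Wz Uz bz) +
          (1 - _root_.sigmoid (catNorm Wz Uz bz)) *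
            (matNorm Ur * ((1/4) * matNorm Uf + _root_.sigmoid (catNorm Wf Uf bf))) +
          (1/4) * (1 + Real.tanh (catNorm Wr Ur br)) * matNorm Uz) * ‖xa - xb‖ +
        ((1/4) * (1 + Real.tanh (catNorm Wr Ur br)) * matNorm Wz +
          matNorm Wr + matNorm Ur * ((1/4) * matNorm Wf)) * ‖ua - ub‖ := by
  set σz := _root_.sigmoid (catNorm Wz Uz bz) with hσzdef
  set σf := _root_.sigmoid (catNorm Wf Uf bf) with hσfdef
  set φr := Real.tanh (catNorm Wr Ur br) with hφrdef
  set A := matNorm Ur * ((1/4) * matNorm Uf + σf) with hAdef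
  set dx := ‖xa - xb‖ with hdxdef
  set du := ‖ua - ub‖ with hdudef
  have hdx : 0 ≤ dx := norm_nonneg _
  have hdu : 0 ≤ du := norm_nonneg _
  have hUz0 : 0 ≤ matNorm Uz := matNorm_nonneg _
  have hWz0 : 0 ≤ matNorm Wz := matNorm_nonneg _
  have hUr0 : 0 ≤ matNorm Ur := matNorm_nonneg _
  have hWr0 : 0 ≤ matNorm Wr := matNorm_nonneg _
  have hUf0 : 0 ≤ matNorm Uf := matNorm_nonneg _
  have hWf0 : 0 ≤ matNorm Wf := matNorm_nonneg _
  have hσz0 : 0 < σz := _root_.sigmoid_pos _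
  have hσz1 : σz < 1 := _root_.sigmoid_lt_one _
  have hσf0 : 0 < σf := _root_.sigmoid_pos _
  have hφ0 : 0 ≤ φr := tanh_nonneg (catNorm_nonneg _ _ _)
  have hA0 : 0 ≤ A := mul_nonneg hUr0 (by positivity)
  -- the product difference bound
  have hprod : ‖(fun i => _root_.sigmoid ((Wf.mulVec ua + Uf.mulVec xa + bf) i)) * xa -
      (fun i => _root_.sigmoid ((Wf.mulVec ub + Uf.mulVec xb + bf) i)) * xb‖ ≤
      (σf + (1/4) * matNorm Uf) * dx + ((1/4) * matNorm Wf) * du := by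
    rw [pi_norm_le_iff_of_nonneg (by positivity)]
    intro l
    rw [Pi.sub_apply, Pi.mul_apply, Pi.mul_apply, Real.norm_eq_abs]
    set fa := _root_.sigmoid ((Wf.mulVec ua + Uf.mulVec xa + bf) l) with hfadef
    set fb := _root_.sigmoid ((Wf.mulVec ub + Uf.mulVec xb + bf) l) with hfbdef
    have hfa0 : 0 < fa := _root_.sigmoid_pos _
    have hfa1 : fa ≤ σf :=
      sigmoid_mono ((le_abs_self _).trans (arg_abs_le Wf Uf bf ua xa hua hxa l))
    have hdf : |fa - fb| ≤ (1/4) * (matNorm Wf * du + matNorm Uf * dx) := by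
      refine (sigmoid_lipschitz _ _).trans ?_
      have e : (Wf.mulVec ua + Uf.mulVec xa + bf) l - (Wf.mulVec ub + Uf.mulVec xb + bf) l =
          Wf.mulVec (ua - ub) l + Uf.mulVec (xa - xb) l := by
        simp [Matrix.mulVec_sub, Pi.add_apply, Pi.sub_apply]; ring
      rw [e]
      have := (abs_add_le (Wf.mulVec (ua - ub) l) (Uf.mulVec (xa - xb) l)).trans
        (add_le_add (abs_mulVec_le Wf (ua - ub) l) (abs_mulVec_le Uf (xa - xb) l))
      linarith
    have hxal : |xa l - xb l| ≤ dx := by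
      rw [← Real.norm_eq_abs, hdxdef]
      exact (norm_le_pi_norm (xa - xb) l).trans_eq rfl
    have hxbl : |xb l| ≤ 1 := by
      rw [← Real.norm_eq_abs]; exact (norm_le_pi_norm xb l).trans hxb
    have key : |fa * xa l - fb * xb l| ≤ fa * |xa l - xb l| + |fa - fb| * |xb l| := by
      have e : fa * xa l - fb * xb l = fa * (xa l - xb l) + (fa - fb) * xb l := by ring
      rw [e]
      refine (abs_add_le _ _).trans ?_
      rw [abs_mul, abs_mul, abs_of_nonneg hfa0.le]
    have k1 : fa * |xa l - xb l| ≤ σf * dx :=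
      mul_le_mul hfa1 hxal (abs_nonneg _) hσf0.le
    have k2 : |fa - fb| * |xb l| ≤ (1/4) * (matNorm Wf * du + matNorm Uf * dx) * 1 :=
      mul_le_mul hdf hxbl (abs_nonneg _) (by positivity)
    linarith [key, k1, k2]
  -- the main component bound
  have hRHS : 0 ≤ (σz + (1 - σz) * A + (1/4) * (1 + φr) * matNorm Uz) * dx +
      ((1/4) * (1 + φr) * matNorm Wz + matNorm Wr + matNorm Ur * ((1/4) * matNorm Wf)) * du := by
    have h1 : 0 ≤ (1 - σz) * A := mul_nonneg (by linarith) hA0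
    have h2 : 0 ≤ (1/4) * (1 + φr) * matNorm Uz := by positivity
    have h3 : 0 ≤ (1/4) * (1 + φr) * matNorm Wz := by positivity
    have h4 : 0 ≤ matNorm Ur * ((1/4) * matNorm Wf) := by positivity
    apply add_nonneg (mul_nonneg (by linarith) hdx) (mul_nonneg (by linarith) hdu)
  rw [pi_norm_le_iff_of_nonneg hRHS]
  intro j
  rw [Pi.sub_apply, gruStep_apply, gruStep_apply, Real.norm_eq_abs]
  set za := _root_.sigmoid ((Wz.mulVec ua + Uz.mulVec xa + bz) j) with hzadef
  set zb := _root_.sigmoid ((Wz.mulVec ub + Uz.mulVec xb + bz) j) with hzbdef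
  set ra := Real.tanh ((Wr.mulVec ua +
    Ur.mulVec ((fun i => _root_.sigmoid ((Wf.mulVec ua + Uf.mulVec xa + bf) i)) * xa) + br) j) with hradef
  set rb := Real.tanh ((Wr.mulVec ub +
    Ur.mulVec ((fun i => _root_.sigmoid ((Wf.mulVec ub + Uf.mulVec xb + bf) i)) * xb) + br) j) with hrbdef
  have hza0 : 0 < za := _root_.sigmoid_pos _
  have hza1 : za ≤ σz :=
    sigmoid_mono ((le_abs_self _).trans (arg_abs_le Wz Uz bz ua xa hua hxa j))
  have hza2 : 1 - σz ≤ za := by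
    have h1 : -(catNorm Wz Uz bz) ≤ (Wz.mulVec ua + Uz.mulVec xa + bz) j := by
      have := arg_abs_le Wz Uz bz ua xa hua hxa j
      have := neg_abs_le ((Wz.mulVec ua + Uz.mulVec xa + bz) j)
      linarith
    have := sigmoid_mono h1
    rw [_root_.sigmoid_neg] at this
    linarith
  have hdz : |za - zb| ≤ (1/4) * (matNorm Wz * du + matNorm Uz * dx) := by
    refine (sigmoid_lipschitz _ _).trans ?_
    have e : (Wz.mulVec ua + Uz.mulVec xa + bz) j - (Wz.mulVec ub + Uz.mulVec xb + bz) j =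
        Wz.mulVec (ua - ub) j + Uz.mulVec (xa - xb) j := by
      simp [Matrix.mulVec_sub, Pi.add_apply, Pi.sub_apply]; ring
    rw [e]
    have := (abs_add_le (Wz.mulVec (ua - ub) j) (Uz.mulVec (xa - xb) j)).trans
      (add_le_add (abs_mulVec_le Wz (ua - ub) j) (abs_mulVec_le Uz (xa - xb) j))
    linarith
  have hrb : |rb| ≤ φr :=
    abs_tanh_le_tanh (arg_abs_le Wr Ur br ub _ hub
      (sig_mul_norm_le (fun i => (Wf.mulVec ub + Uf.mulVec xb + bf) i) xb hxb) j)
  have hdr : |ra - rb| ≤ matNorm Wr * du +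
      matNorm Ur * ((σf + (1/4) * matNorm Uf) * dx + ((1/4) * matNorm Wf) * du) := by
    refine (tanh_lipschitz _ _).trans ?_
    have e : (Wr.mulVec ua +
        Ur.mulVec ((fun i => _root_.sigmoid ((Wf.mulVec ua + Uf.mulVec xa + bf) i)) * xa) + br) j -
        (Wr.mulVec ub +
        Ur.mulVec ((fun i => _root_.sigmoid ((Wf.mulVec ub + Uf.mulVec xb + bf) i)) * xb) + br) j =
        Wr.mulVec (ua - ub) j +
        Ur.mulVec ((fun i => _root_.sigmoid ((Wf.mulVec ua + Uf.mulVec xa + bf) i)) * xa -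
          (fun i => _root_.sigmoid ((Wf.mulVec ub + Uf.mulVec xb + bf) i)) * xb) j := by
      simp [Matrix.mulVec_sub, Pi.add_apply, Pi.sub_apply]; ring
    rw [e]
    have h1 := abs_add_le (Wr.mulVec (ua - ub) j)
      (Ur.mulVec ((fun i => _root_.sigmoid ((Wf.mulVec ua + Uf.mulVec xa + bf) i)) * xa -
        (fun i => _root_.sigmoid ((Wf.mulVec ub + Uf.mulVec xb + bf) i)) * xb) j)
    have h2 := abs_mulVec_le Wr (ua - ub) j
    have h3 := abs_mulVec_le Ur ((fun i => _root_.sigmoid ((Wf.mulVec ua + Uf.mulVec xa + bf) i)) * xa -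
        (fun i => _root_.sigmoid ((Wf.mulVec ub + Uf.mulVec xb + bf) i)) * xb) j
    have h4 := mul_le_mul_of_nonneg_left hprod hUr0
    linarith
  have hxj : |xa j - xb j| ≤ dx := by
    rw [← Real.norm_eq_abs, hdxdef]
    exact norm_le_pi_norm (xa - xb) j
  have hxbj : |xb j| ≤ 1 := by
    rw [← Real.norm_eq_abs]; exact (norm_le_pi_norm xb j).trans hxb
  have e : za * xa j + (1 - za) * ra - (zb * xb j + (1 - zb) * rb) =
      za * (xa j - xb j) + (za - zb) * (xb j - rb) + (1 - za) * (ra - rb) := by ring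
  rw [e]
  have h1za : 0 ≤ 1 - za := by
    have := _root_.sigmoid_lt_one ((Wz.mulVec ua + Uz.mulVec xa + bz) j)
    rw [← hzadef] at this; linarith
  have t1 : |za * (xa j - xb j) + (za - zb) * (xb j - rb) + (1 - za) * (ra - rb)| ≤
      za * |xa j - xb j| + |za - zb| * |xb j - rb| + (1 - za) * |ra - rb| := by
    have h1 := abs_add_le (za * (xa j - xb j) + (za - zb) * (xb j - rb)) ((1 - za) * (ra - rb))
    have h2 := abs_add_le (za * (xa j - xb j)) ((za - zb) * (xb j - rb))
    have e1 : |za * (xa j - xb j)| = za * |xa j - xb j| := by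
      rw [abs_mul, abs_of_nonneg hza0.le]
    have e2 : |(za - zb) * (xb j - rb)| = |za - zb| * |xb j - rb| := abs_mul _ _
    have e3 : |(1 - za) * (ra - rb)| = (1 - za) * |ra - rb| := by
      rw [abs_mul, abs_of_nonneg h1za]
    linarith
  have t2 : |xb j - rb| ≤ 1 + φr := by
    have := abs_sub (xb j) rb
    linarith [hxbj, hrb]
  have q1 : za * |xa j - xb j| ≤ za * dx := mul_le_mul_of_nonneg_left hxj hza0.le
  have q2 : |za - zb| * |xb j - rb| ≤
      ((1/4) * (matNorm Wz * du + matNorm Uz * dx)) * (1 + φr) :=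
    mul_le_mul hdz t2 (abs_nonneg _) (by positivity)
  have q3 : (1 - za) * |ra - rb| ≤ (1 - za) * (matNorm Wr * du +
      matNorm Ur * ((σf + (1/4) * matNorm Uf) * dx + ((1/4) * matNorm Wf) * du)) :=
    mul_le_mul_of_nonneg_left hdr h1za
  have hQdu : 0 ≤ matNorm Wr * du + matNorm Ur * ((1/4) * matNorm Wf) * du := by positivity
  -- key scalar rearrangements
  have q5 : za * dx + (1 - za) * (A * dx) ≤ (σz + (1 - σz) * A) * dx := by
    nlinarith [mul_nonneg (mul_nonneg (sub_nonneg.2 hza1) (sub_nonneg.2 hA)) hdx]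
  have q6 : 0 ≤ za * (matNorm Wr * du + matNorm Ur * ((1/4) * matNorm Wf) * du) :=
    mul_nonneg hza0.le hQdu
  have expand : (1 - za) * (matNorm Wr * du +
      matNorm Ur * ((σf + (1/4) * matNorm Uf) * dx + ((1/4) * matNorm Wf) * du)) =
      (1 - za) * (A * dx) +
      (1 - za) * (matNorm Wr * du + matNorm Ur * ((1/4) * matNorm Wf) * du) := by
    rw [hAdef]; ring
  have q6' : (1 - za) * (matNorm Wr * du + matNorm Ur * ((1/4) * matNorm Wf) * du) ≤
      matNorm Wr * du + matNorm Ur * ((1/4) * matNorm Wf) * du := by linarith [q6]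
  linarith [t1, q1, q2, q3, q5, q6', expand]

lemma cascade {lam rho mu Cv Gv s0 du C' G' : ℝ} {d v : ℕ → ℝ}
    (hlam0 : 0 ≤ lam) (hrho0 : 0 < rho)
    (hmu : 0 ≤ mu) (hs0 : 0 ≤ s0) (hdu : 0 ≤ du)
    (hd0 : d 0 ≤ s0)
    (hv : ∀ k, v k ≤ Cv * rho ^ k * s0 + Gv * du)
    (hrec : ∀ k, d (k + 1) ≤ lam * d k + mu * v (k + 1))
    (hC1 : 1 ≤ C') (hC : lam * C' + mu * Cv * rho ≤ C' * rho)
    (hG0 : 0 ≤ G') (hG : lam * G' + mu * Gv ≤ G') :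
    ∀ k, d k ≤ C' * rho ^ k * s0 + G' * du := by
  intro k
  induction k with
  | zero =>
    simp only [pow_zero, mul_one]
    nlinarith [mul_nonneg hG0 hdu]
  | succ k ih =>
    have hvk := hv (k + 1)
    have hrk := hrec k
    have hpow : (0:ℝ) < rho ^ k := pow_pos hrho0 k
    have h1 : lam * d k ≤ lam * (C' * rho ^ k * s0 + G' * du) :=
      mul_le_mul_of_nonneg_left ih hlam0
    have h2 : mu * v (k + 1) ≤ mu * (Cv * rho ^ (k + 1) * s0 + Gv * du) :=
      mul_le_mul_of_nonneg_left hvk hmu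
    have hps : rho ^ (k + 1) = rho * rho ^ k := by rw [pow_succ]; ring
    have h3 : (lam * C' + mu * Cv * rho) * (rho ^ k * s0) ≤ (C' * rho) * (rho ^ k * s0) :=
      mul_le_mul_of_nonneg_right hC (mul_nonneg hpow.le hs0)
    have h4 : (lam * G' + mu * Gv) * du ≤ G' * du := mul_le_mul_of_nonneg_right hG hdu
    calc d (k + 1) ≤ lam * d k + mu * v (k + 1) := hrk
      _ ≤ lam * (C' * rho ^ k * s0 + G' * du) + mu * (Cv * rho ^ (k + 1) * s0 + Gv * du) := by
          linarith
      _ = (lam * C' + mu * Cv * rho) * (rho ^ k * s0) + (lam * G' + mu * Gv) * du := by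
          rw [hps]; ring
      _ ≤ (C' * rho) * (rho ^ k * s0) + G' * du := by linarith
      _ = C' * rho ^ (k + 1) * s0 + G' * du := by rw [hps]; ring

lemma isKInf_linear {c : ℝ} (hc : 0 < c) : IsKInf (fun s => c * s) := by
  refine ⟨(continuous_const.mul continuous_id).continuousOn, ?_, by simp, ?_⟩
  · intro a _ b _ hab
    exact mul_lt_mul_of_pos_left hab hc
  · intro M
    refine ⟨(|M| + 1) / c, by positivity, ?_⟩
    show M < c * ((|M| + 1) / c)
    rw [mul_div_cancel₀ _ (ne_of_gt hc)]
    calc M ≤ |M| := le_abs_self M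
      _ < |M| + 1 := by linarith

lemma isKL_geom {C rho : ℝ} (hC : 0 < C) (h0 : 0 < rho) (h1 : rho < 1) :
    IsKL (fun s k => C * rho ^ k * s) := by
  refine ⟨fun k => isKInf_linear (by positivity), ?_, ?_⟩
  · intro s hs k l hkl
    have h : rho ^ l ≤ rho ^ k := pow_le_pow_of_le_one h0.le h1.le hkl
    show C * rho ^ l * s ≤ C * rho ^ k * s
    exact mul_le_mul_of_nonneg_right (mul_le_mul_of_nonneg_left h hC.le) hs
  · intro s _
    have h := (tendsto_pow_atTop_nhds_zero_of_lt_one h0.le h1).const_mul (C * s)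
    simp only [mul_zero] at h
    convert h using 2 with k
    ring

noncomputable def lamG {nu nx : ℕ} (Wz Wf Wr : Matrix (Fin nx) (Fin nu) ℝ)
    (Uz Uf Ur : Matrix (Fin nx) (Fin nx) ℝ) (bz bf br : Fin nx → ℝ) : ℝ :=
  _root_.sigmoid (catNorm Wz Uz bz) +
    (1 - _root_.sigmoid (catNorm Wz Uz bz)) *
      (matNorm Ur * ((1/4) * matNorm Uf + _root_.sigmoid (catNorm Wf Uf bf))) +
    (1/4) * (1 + Real.tanh (catNorm Wr Ur br)) * matNorm Uz

noncomputable def muG {nu nx : ℕ} (Wz Wf Wr : Matrix (Fin nx) (Fin nu) ℝ)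
    (Uz Uf Ur : Matrix (Fin nx) (Fin nx) ℝ) (bz bf br : Fin nx → ℝ) : ℝ :=
  (1/4) * (1 + Real.tanh (catNorm Wr Ur br)) * matNorm Wz +
    matNorm Wr + matNorm Ur * ((1/4) * matNorm Wf)

lemma gru_contract' {nu nx : ℕ} (Wz Wf Wr : Matrix (Fin nx) (Fin nu) ℝ)
    (Uz Uf Ur : Matrix (Fin nx) (Fin nx) ℝ) (bz bf br : Fin nx → ℝ)
    (ua ub : Fin nu → ℝ) (xa xb : Fin nx → ℝ)
    (hua : ‖ua‖ ≤ 1) (hub : ‖ub‖ ≤ 1) (hxa : ‖xa‖ ≤ 1) (hxb : ‖xb‖ ≤ 1)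
    (hA : matNorm Ur * ((1/4) * matNorm Uf + _root_.sigmoid (catNorm Wf Uf bf)) ≤ 1) :
    ‖gruStep Wz Wf Wr Uz Uf Ur bz bf br ua xa -
        gruStep Wz Wf Wr Uz Uf Ur bz bf br ub xb‖ ≤
      lamG Wz Wf Wr Uz Uf Ur bz bf br * ‖xa - xb‖ +
        muG Wz Wf Wr Uz Uf Ur bz bf br * ‖ua - ub‖ := by
  have := gru_contract Wz Wf Wr Uz Uf Ur bz bf br ua ub xa xb hua hub hxa hxb hA
  unfold lamG muG
  linarith [this]

lemma lamG_nonneg {nu nx : ℕ} (Wz Wf Wr : Matrix (Fin nx) (Fin nu) ℝ)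
    (Uz Uf Ur : Matrix (Fin nx) (Fin nx) ℝ) (bz bf br : Fin nx → ℝ) :
    0 ≤ lamG Wz Wf Wr Uz Uf Ur bz bf br := by
  unfold lamG
  have h1 := _root_.sigmoid_pos (catNorm Wz Uz bz)
  have h2 := _root_.sigmoid_lt_one (catNorm Wz Uz bz)
  have h3 := _root_.sigmoid_pos (catNorm Wf Uf bf)
  have h4 := tanh_nonneg (catNorm_nonneg Wr Ur br)
  have h5 := matNorm_nonneg Ur
  have h6 := matNorm_nonneg Uf
  have h7 := matNorm_nonneg Uz
  have e1 : 0 ≤ (1 - _root_.sigmoid (catNorm Wz Uz bz)) *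
      (matNorm Ur * ((1/4) * matNorm Uf + _root_.sigmoid (catNorm Wf Uf bf))) := by
    apply mul_nonneg (by linarith) (mul_nonneg h5 (by linarith))
  have e2 : 0 ≤ (1/4) * (1 + Real.tanh (catNorm Wr Ur br)) * matNorm Uz := by
    apply mul_nonneg (by linarith) h7
  linarith

lemma muG_nonneg {nu nx : ℕ} (Wz Wf Wr : Matrix (Fin nx) (Fin nu) ℝ)
    (Uz Uf Ur : Matrix (Fin nx) (Fin nx) ℝ) (bz bf br : Fin nx → ℝ) :
    0 ≤ muG Wz Wf Wr Uz Uf Ur bz bf br := by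
  unfold muG
  have h4 := tanh_nonneg (catNorm_nonneg Wr Ur br)
  have h5 := matNorm_nonneg Ur
  have h6 := matNorm_nonneg Wf
  have h7 := matNorm_nonneg Wz
  have h8 := matNorm_nonneg Wr
  have e1 : 0 ≤ (1/4) * (1 + Real.tanh (catNorm Wr Ur br)) * matNorm Wz := by
    apply mul_nonneg (by linarith) h7
  have e2 : 0 ≤ matNorm Ur * ((1/4) * matNorm Wf) := by positivity
  linarith

lemma hcond_conseq {nu nx : ℕ} (Wz Wf Wr : Matrix (Fin nx) (Fin nu) ℝ)
    (Uz Uf Ur : Matrix (Fin nx) (Fin nx) ℝ) (bz bf br : Fin nx → ℝ)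
    (h : matNorm Ur * ((1/4) * matNorm Uf + _root_.sigmoid (catNorm Wf Uf bf)) <
      1 - (1/4) *
        ((1 + Real.tanh (catNorm Wr Ur br)) / (1 - _root_.sigmoid (catNorm Wz Uz bz))) *
        matNorm Uz) :
    matNorm Ur * ((1/4) * matNorm Uf + _root_.sigmoid (catNorm Wf Uf bf)) ≤ 1 ∧
      lamG Wz Wf Wr Uz Uf Ur bz bf br < 1 := by
  have hσ1 := _root_.sigmoid_lt_one (catNorm Wz Uz bz)
  have hσ0 := _root_.sigmoid_pos (catNorm Wz Uz bz)
  have ht : 0 < 1 - _root_.sigmoid (catNorm Wz Uz bz) := by linarith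
  have hφ := tanh_nonneg (catNorm_nonneg Wr Ur br)
  have hUz := matNorm_nonneg Uz
  have hB : 0 ≤ (1/4) *
      ((1 + Real.tanh (catNorm Wr Ur br)) / (1 - _root_.sigmoid (catNorm Wz Uz bz))) *
      matNorm Uz := by
    apply mul_nonneg (mul_nonneg (by norm_num) (div_nonneg (by linarith) ht.le)) hUz
  have hA1 : matNorm Ur * ((1/4) * matNorm Uf + _root_.sigmoid (catNorm Wf Uf bf)) ≤ 1 := by
    linarith
  refine ⟨hA1, ?_⟩
  unfold lamG
  set σz := _root_.sigmoid (catNorm Wz Uz bz)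
  set A := matNorm Ur * ((1/4) * matNorm Uf + _root_.sigmoid (catNorm Wf Uf bf)) with hAdef
  set φ := Real.tanh (catNorm Wr Ur br)
  -- from h : A < 1 - (1/4) * ((1 + φ) / (1 - σz)) * matNorm Uz
  have key : (1/4) * ((1 + φ) / (1 - σz)) * matNorm Uz * (1 - σz) =
      (1/4) * (1 + φ) * matNorm Uz := by
    field_simp
  have h2 := mul_lt_mul_of_pos_right h ht
  rw [sub_mul, key] at h2
  -- h2 : A * (1 - σz) < 1 * (1 - σz) - (1/4) * (1 + φ) * matNorm Uz
  nlinarith [h2]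

/-- **Corollary 2 (relaxed δISS condition for deep GRUs inside the invariant set).**
With `σ̄_z^i = σ(‖[W_z^i U_z^i b_z^i]‖_∞)`, `σ̄_f^i = σ(‖[W_f^i U_f^i b_f^i]‖_∞)`,
`φ̄_r^i = tanh(‖[W_r^i U_r^i b_r^i]‖_∞)`, if for every layer
`‖U_r^i‖_∞ ((1/4) ‖U_f^i‖_∞ + σ̄_f^i) < 1 - (1/4) ((1 + φ̄_r^i)/(1 - σ̄_z^i)) ‖U_z^i‖_∞`
then the deep GRU restricted to initial states with `‖x̄^i‖_∞ ≤ 1` for all layers is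
Incrementally Input-to-State Stable. -/
theorem deep_gru_deltaISS_relaxed {nu M : ℕ} {n : ℕ → ℕ}
    (Wz Wf Wr : ∀ i : ℕ, Matrix (Fin (n i)) (Fin (inDim nu n i)) ℝ)
    (Uz Uf Ur : ∀ i : ℕ, Matrix (Fin (n i)) (Fin (n i)) ℝ)
    (bz bf br : ∀ i : ℕ, Fin (n i) → ℝ)
    (hcond : ∀ i < M,
      matNorm (Ur i) * ((1 / 4) * matNorm (Uf i) +
          _root_.sigmoid (catNorm (Wf i) (Uf i) (bf i))) <
        1 - (1 / 4) *
          ((1 + Real.tanh (catNorm (Wr i) (Ur i) (br i))) /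
            (1 - _root_.sigmoid (catNorm (Wz i) (Uz i) (bz i)))) *
          matNorm (Uz i)) :
    ∃ β : ℝ → ℕ → ℝ, ∃ γu : ℝ → ℝ, IsKL β ∧ IsKInf γu ∧
      ∀ xbara xbarb : ∀ i : ℕ, Fin (n i) → ℝ,
        (∀ i < M, ‖xbara i‖ ≤ 1) → (∀ i < M, ‖xbarb i‖ ≤ 1) →
        ∀ ua ub : ℕ → Fin nu → ℝ, (∀ t, ‖ua t‖ ≤ 1) → (∀ t, ‖ub t‖ ≤ 1) →
          ∀ xa xb : ℕ → ∀ i : ℕ, Fin (n i) → ℝ, xa 0 = xbara → xb 0 = xbarb →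
            (∀ k, 0 < M → xa (k + 1) 0 =
              gruStep (Wz 0) (Wf 0) (Wr 0) (Uz 0) (Uf 0) (Ur 0) (bz 0) (bf 0) (br 0)
                (ua k) (xa k 0)) →
            (∀ k, ∀ i : ℕ, i + 1 < M → xa (k + 1) (i + 1) =
              gruStep (Wz (i + 1)) (Wf (i + 1)) (Wr (i + 1)) (Uz (i + 1)) (Uf (i + 1))
                (Ur (i + 1)) (bz (i + 1)) (bf (i + 1)) (br (i + 1))
                (xa (k + 1) i) (xa k (i + 1))) →
            (∀ k, 0 < M → xb (k + 1) 0 =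
              gruStep (Wz 0) (Wf 0) (Wr 0) (Uz 0) (Uf 0) (Ur 0) (bz 0) (bf 0) (br 0)
                (ub k) (xb k 0)) →
            (∀ k, ∀ i : ℕ, i + 1 < M → xb (k + 1) (i + 1) =
              gruStep (Wz (i + 1)) (Wf (i + 1)) (Wr (i + 1)) (Uz (i + 1)) (Uf (i + 1))
                (Ur (i + 1)) (bz (i + 1)) (bf (i + 1)) (br (i + 1))
                (xb (k + 1) i) (xb k (i + 1))) →
              ∀ k : ℕ, (⨆ i : Fin M, ‖xa k (i : ℕ) - xb k (i : ℕ)‖) ≤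
                β (⨆ i : Fin M, ‖xbara (i : ℕ) - xbarb (i : ℕ)‖) k +
                  γu (⨆ t, ‖ua t - ub t‖) := by
  rcases Nat.eq_zero_or_pos M with hM0 | hM
  · -- trivial case M = 0
    subst hM0
    refine ⟨fun s k => 1 * (1/2:ℝ)^k * s, fun t => 1 * t,
      isKL_geom one_pos (by norm_num) (by norm_num), isKInf_linear one_pos, ?_⟩
    intro xbara xbarb _ _ ua ub _ _ xa xb _ _ _ _ _ _ k
    have h0 : (⨆ i : Fin 0, ‖xa k (i:ℕ) - xb k (i:ℕ)‖) = 0 := Real.iSup_of_isEmpty _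
    have h1 : (⨆ i : Fin 0, ‖xbara (i:ℕ) - xbarb (i:ℕ)‖) = 0 := Real.iSup_of_isEmpty _
    have hdu : 0 ≤ ⨆ t, ‖ua t - ub t‖ := Real.iSup_nonneg fun t => norm_nonneg _
    rw [h0, h1]
    simp only [mul_zero, one_mul, zero_add]
    linarith
  · haveI : Nonempty (Fin M) := ⟨⟨0, hM⟩⟩
    obtain ⟨lam, hlam⟩ : ∃ lam : ℕ → ℝ, ∀ i, lam i =
        lamG (Wz i) (Wf i) (Wr i) (Uz i) (Uf i) (Ur i) (bz i) (bf i) (br i) :=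
      ⟨_, fun i => rfl⟩
    obtain ⟨mu, hmu⟩ : ∃ mu : ℕ → ℝ, ∀ i, mu i =
        muG (Wz i) (Wf i) (Wr i) (Uz i) (Uf i) (Ur i) (bz i) (bf i) (br i) :=
      ⟨_, fun i => rfl⟩
    have hlam0 : ∀ i, 0 ≤ lam i := fun i => (hlam i) ▸
      lamG_nonneg (Wz i) (Wf i) (Wr i) (Uz i) (Uf i) (Ur i) (bz i) (bf i) (br i)
    have hmu0 : ∀ i, 0 ≤ mu i := fun i => (hmu i) ▸
      muG_nonneg (Wz i) (Wf i) (Wr i) (Uz i) (Uf i) (Ur i) (bz i) (bf i) (br i)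
    have hAle : ∀ i, i < M → matNorm (Ur i) * ((1/4) * matNorm (Uf i) +
        _root_.sigmoid (catNorm (Wf i) (Uf i) (bf i))) ≤ 1 := fun i hi =>
      (hcond_conseq (Wz i) (Wf i) (Wr i) (Uz i) (Uf i) (Ur i) (bz i) (bf i) (br i)
        (hcond i hi)).1
    have hlam1 : ∀ i, i < M → lam i < 1 := fun i hi => (hlam i) ▸
      (hcond_conseq (Wz i) (Wf i) (Wr i) (Uz i) (Uf i) (Ur i) (bz i) (bf i) (br i)
        (hcond i hi)).2
    have hne : (Finset.range M).Nonempty := ⟨0, Finset.mem_range.2 hM⟩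
    set lmax := (Finset.range M).sup' hne lam with hlmaxdef
    have hlmax_ge : ∀ i, i < M → lam i ≤ lmax := fun i hi =>
      Finset.le_sup' lam (Finset.mem_range.2 hi)
    have hlmax0 : 0 ≤ lmax := le_trans (hlam0 0) (hlmax_ge 0 hM)
    have hlmax1 : lmax < 1 := (Finset.sup'_lt_iff hne).2 fun i hi =>
      hlam1 i (Finset.mem_range.1 hi)
    set ρ := (1 + lmax)/2 with hρdef
    have hρ0 : 0 < ρ := by rw [hρdef]; linarith
    have hρ1 : ρ < 1 := by rw [hρdef]; linarith
    have hlρ : lmax < ρ := by rw [hρdef]; linarith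
    have hlamρ : ∀ i, i < M → lam i < ρ := fun i hi =>
      lt_of_le_of_lt (hlmax_ge i hi) hlρ
    obtain ⟨Cf, hCfz, hCfs⟩ : ∃ Cf : ℕ → ℝ, Cf 0 = 1 ∧ ∀ j, Cf (j+1) =
        1 + |mu (j+1) * Cf j * ρ / (ρ - lam (j+1))| :=
      ⟨fun i => Nat.rec 1 (fun j Cj => 1 + |mu (j+1) * Cj * ρ / (ρ - lam (j+1))|) i,
        rfl, fun j => rfl⟩
    obtain ⟨Gf, hGfz, hGfs⟩ : ∃ Gf : ℕ → ℝ, Gf 0 = |mu 0 / (1 - lam 0)| ∧ ∀ j, Gf (j+1) =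
        |mu (j+1) * Gf j / (1 - lam (j+1))| :=
      ⟨fun i => Nat.rec (|mu 0 / (1 - lam 0)|) (fun j Gj => |mu (j+1) * Gj / (1 - lam (j+1))|) i,
        rfl, fun j => rfl⟩
    have hCf1 : ∀ i, 1 ≤ Cf i := by
      intro i
      cases i with
      | zero => rw [hCfz]
      | succ j => rw [hCfs j]; linarith [abs_nonneg (mu (j+1) * Cf j * ρ / (ρ - lam (j+1)))]
    have hGf0 : ∀ i, 0 ≤ Gf i := by
      intro i
      cases i with
      | zero => rw [hGfz]; exact abs_nonneg _
      | succ j => rw [hGfs j]; exact abs_nonneg _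
    set Cmax := (Finset.range M).sup' hne Cf with hCmaxdef
    set Gmax := (Finset.range M).sup' hne Gf with hGmaxdef
    have hCmax0 : 0 < Cmax :=
      lt_of_lt_of_le one_pos ((hCf1 0).trans (Finset.le_sup' Cf (Finset.mem_range.2 hM)))
    have hGmax0 : 0 ≤ Gmax := (hGf0 0).trans (Finset.le_sup' Gf (Finset.mem_range.2 hM))
    refine ⟨fun s k => Cmax * ρ^k * s, fun t => (Gmax + 1) * t,
      isKL_geom hCmax0 hρ0 hρ1, isKInf_linear (by linarith), ?_⟩
    intro xbara xbarb hxbara hxbarb ua ub hua hub xa xb hxa0 hxb0 hsa0 hsa1 hsb0 hsb1 k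
    -- invariance of the unit ball
    have hinva : ∀ k, ∀ i, i < M → ‖xa k i‖ ≤ 1 := by
      intro k
      induction k with
      | zero => intro i hi; rw [hxa0]; exact hxbara i hi
      | succ k ih =>
        intro i hi
        cases i with
        | zero => rw [hsa0 k hM]; exact gru_invariant _ _ _ _ _ _ _ _ _ _ _ (ih 0 hM)
        | succ j => rw [hsa1 k j hi]; exact gru_invariant _ _ _ _ _ _ _ _ _ _ _ (ih (j+1) hi)
    have hinvb : ∀ k, ∀ i, i < M → ‖xb k i‖ ≤ 1 := by
      intro k
      induction k with
      | zero => intro i hi; rw [hxb0]; exact hxbarb i hi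
      | succ k ih =>
        intro i hi
        cases i with
        | zero => rw [hsb0 k hM]; exact gru_invariant _ _ _ _ _ _ _ _ _ _ _ (ih 0 hM)
        | succ j => rw [hsb1 k j hi]; exact gru_invariant _ _ _ _ _ _ _ _ _ _ _ (ih (j+1) hi)
    set s0 := ⨆ i : Fin M, ‖xbara (i:ℕ) - xbarb (i:ℕ)‖ with hs0def
    have hs0 : 0 ≤ s0 := Real.iSup_nonneg fun i => norm_nonneg _
    have hs0le : ∀ i, i < M → ‖xbara i - xbarb i‖ ≤ s0 := by
      intro i hi
      rw [hs0def]
      exact le_ciSup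
        (Finite.bddAbove_range fun i : Fin M => ‖xbara (i:ℕ) - xbarb (i:ℕ)‖)
        (⟨i, hi⟩ : Fin M)
    set du := ⨆ t, ‖ua t - ub t‖ with hdudef
    have hbdd : BddAbove (Set.range fun t => ‖ua t - ub t‖) := by
      refine ⟨2, ?_⟩
      rintro x ⟨t, rfl⟩
      calc ‖ua t - ub t‖ ≤ ‖ua t‖ + ‖ub t‖ := norm_sub_le _ _
        _ ≤ 2 := by linarith [hua t, hub t]
    have hdule : ∀ t, ‖ua t - ub t‖ ≤ du := fun t => le_ciSup hbdd t
    have hdu : 0 ≤ du := le_trans (norm_nonneg _) (hdule 0)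
    -- layer-0 contraction
    have hc0 : ∀ k, ‖xa (k+1) 0 - xb (k+1) 0‖ ≤ lam 0 * ‖xa k 0 - xb k 0‖ + mu 0 * du := by
      intro k
      rw [hsa0 k hM, hsb0 k hM, hlam 0, hmu 0]
      refine (gru_contract' (Wz 0) (Wf 0) (Wr 0) (Uz 0) (Uf 0) (Ur 0) (bz 0) (bf 0) (br 0)
        (ua k) (ub k) (xa k 0) (xb k 0) (hua k) (hub k) (hinva k 0 hM) (hinvb k 0 hM)
        (hAle 0 hM)).trans ?_
      have h := mul_le_mul_of_nonneg_left (hdule k)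
        (muG_nonneg (Wz 0) (Wf 0) (Wr 0) (Uz 0) (Uf 0) (Ur 0) (bz 0) (bf 0) (br 0))
      exact add_le_add le_rfl h
    -- main per-layer bound
    have main : ∀ i, i < M → ∀ k, ‖xa k i - xb k i‖ ≤ Cf i * ρ^k * s0 + Gf i * du := by
      intro i
      induction i with
      | zero =>
        intro _
        have hl1 := hlam1 0 hM
        have h1l : (0:ℝ) < 1 - lam 0 := by linarith
        have hGabs : Gf 0 = mu 0 / (1 - lam 0) := by
          rw [hGfz]; exact abs_of_nonneg (div_nonneg (hmu0 0) h1l.le)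
        refine cascade (v := fun _ => du) (Cv := 0) (Gv := 1)
          (hlam0 0) hρ0 (hmu0 0) hs0 hdu ?_ (fun k => by simp) hc0 ?_ ?_ (hGf0 0) ?_
        · rw [hxa0, hxb0]; exact hs0le 0 hM
        · rw [hCfz]
        · rw [hCfz]
          have := hlamρ 0 hM
          nlinarith [hρ0]
        · rw [hGabs]
          have he := div_mul_cancel₀ (mu 0) (ne_of_gt h1l)
          nlinarith [he]
      | succ j ihj =>
        intro hj1
        have hjM : j < M := Nat.lt_of_succ_lt hj1
        have ih := ihj hjM
        have hl1 := hlam1 (j+1) hj1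
        have hlρ' := hlamρ (j+1) hj1
        have hd : (0:ℝ) < ρ - lam (j+1) := by linarith
        have h1l : (0:ℝ) < 1 - lam (j+1) := by linarith
        have hCabs : Cf (j+1) = 1 + mu (j+1) * Cf j * ρ / (ρ - lam (j+1)) := by
          rw [hCfs j]
          congr 1
          exact abs_of_nonneg (div_nonneg (mul_nonneg (mul_nonneg (hmu0 _)
            (le_trans zero_le_one (hCf1 j))) hρ0.le) hd.le)
        have hGabs : Gf (j+1) = mu (j+1) * Gf j / (1 - lam (j+1)) := by
          rw [hGfs j]
          exact abs_of_nonneg (div_nonneg (mul_nonneg (hmu0 _) (hGf0 j)) h1l.le)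
        have hcs : ∀ k, ‖xa (k+1) (j+1) - xb (k+1) (j+1)‖ ≤
            lam (j+1) * ‖xa k (j+1) - xb k (j+1)‖ + mu (j+1) * ‖xa (k+1) j - xb (k+1) j‖ := by
          intro k
          rw [hsa1 k j hj1, hsb1 k j hj1, hlam (j+1), hmu (j+1)]
          exact gru_contract' (Wz (j+1)) (Wf (j+1)) (Wr (j+1)) (Uz (j+1)) (Uf (j+1))
            (Ur (j+1)) (bz (j+1)) (bf (j+1)) (br (j+1))
            (xa (k+1) j) (xb (k+1) j) (xa k (j+1)) (xb k (j+1))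
            (hinva (k+1) j hjM) (hinvb (k+1) j hjM)
            (hinva k (j+1) hj1) (hinvb k (j+1) hj1) (hAle (j+1) hj1)
        refine cascade (v := fun k => ‖xa k j - xb k j‖) (Cv := Cf j) (Gv := Gf j)
          (hlam0 (j+1)) hρ0 (hmu0 (j+1)) hs0 hdu ?_ ih hcs (hCf1 (j+1)) ?_ (hGf0 (j+1)) ?_
        · rw [hxa0, hxb0]; exact hs0le (j+1) hj1
        · rw [hCabs]
          have he := div_mul_cancel₀ (mu (j+1) * Cf j * ρ) (ne_of_gt hd)
          nlinarith [he, hd.le]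
        · rw [hGabs]
          have he := div_mul_cancel₀ (mu (j+1) * Gf j) (ne_of_gt h1l)
          nlinarith [he]
    -- conclusion
    show (⨆ i : Fin M, ‖xa k (i:ℕ) - xb k (i:ℕ)‖) ≤ Cmax * ρ^k * s0 + (Gmax + 1) * du
    apply ciSup_le
    intro i
    have h := main i i.isLt k
    have h1 : Cf i * ρ^k * s0 ≤ Cmax * ρ^k * s0 :=
      mul_le_mul_of_nonneg_right (mul_le_mul_of_nonneg_right
        (Finset.le_sup' Cf (Finset.mem_range.2 i.isLt)) (pow_nonneg hρ0.le k)) hs0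
    have h2 : Gf i * du ≤ (Gmax + 1) * du :=
      mul_le_mul_of_nonneg_right
        (by linarith [Finset.le_sup' Gf (Finset.mem_range.2 i.isLt)]) hdu
    linarith
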